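/- In the Frank algebra F(n), the triple brackets recover the J-ternary triple product: for all f, g, h ∈ O(1;n), [[u ⊗ f, v ⊗ g], u ⊗ h] = u ⊗ (g·f·∂(h) − h·g·∂(f)) = u ⊗ L_{f,g}h, and [[v ⊗ f, u ⊗ g], v ⊗ h] = −v ⊗ L_{f,g}h, where u, v is the chosen symplectic basis of U with λ(u,v) = 1. -/

import Mathlib

/-- The product of the divided power algebra `O(1;n)`, written in coordinates with
respect to the basis `e_0, …, e_{3^n - 1}`: it is the bilinear product determined by
`e_i · e_j = binom(i+j, i) e_{i+j}`, where `e_k = 0` for `k ≥ 3^n`. -/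
def omul (Φ : Type*) [Field Φ] (n : ℕ) (f g : Fin (3 ^ n) → Φ) : Fin (3 ^ n) → Φ :=
  fun k => ∑ i : Fin (3 ^ n), ∑ j : Fin (3 ^ n),
    if (i : ℕ) + (j : ℕ) = (k : ℕ)
    then (((i : ℕ) + (j : ℕ)).choose (i : ℕ) : Φ) * f i * g j
    else 0

/-- The basis element `e_i` of `O(1;n)`. -/
def eb (Φ : Type*) [Field Φ] (n : ℕ) (i : Fin (3 ^ n)) : Fin (3 ^ n) → Φ :=
  Pi.single i 1

/-- The linear map `∂` on `O(1;n)`, with `∂ e_0 = 0` and `∂ e_i = e_{i-1}`;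
in coordinates, `(∂ f)_k = f_{k+1}` (interpreted as `0` when `k + 1 ≥ 3^n`). -/
def odel (Φ : Type*) [Field Φ] (n : ℕ) (f : Fin (3 ^ n) → Φ) : Fin (3 ^ n) → Φ :=
  fun k => if h : (k : ℕ) + 1 < 3 ^ n then f ⟨(k : ℕ) + 1, h⟩ else 0

/-- The triple product `L_{f,g}h = f·g·∂(h) − h·g·∂(f)` on `O(1;n)`. -/
def Lt (Φ : Type*) [Field Φ] (n : ℕ) (f g h : Fin (3 ^ n) → Φ) : Fin (3 ^ n) → Φ :=
  omul Φ n (omul Φ n f g) (odel Φ n h) - omul Φ n (omul Φ n h g) (odel Φ n f)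

/-- The Frank algebra `F(n) = (U ⊗ O) ⊕ (sl(U) ⊗ O) ⊕ (Φ·Id_U ⊗ O)` in coordinates:
an element is `u⊗p + v⊗q + H⊗a + E⊗b + F⊗c + Id⊗w`, where `u, v` is the symplectic
basis of `U` (`λ(u,v) = 1`) and `H = diag(1,−1)`, `E` (`Ev = u, Eu = 0`),
`F` (`Fu = v, Fv = 0`) is the standard basis of `sl(U)` in the basis `u, v`. -/
structure Frank (Φ : Type*) [Field Φ] (n : ℕ) where
  p : Fin (3 ^ n) → Φ
  q : Fin (3 ^ n) → Φ
  a : Fin (3 ^ n) → Φ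
  b : Fin (3 ^ n) → Φ
  c : Fin (3 ^ n) → Φ
  w : Fin (3 ^ n) → Φ

/-- The bracket of the Frank algebra `F(n)`, obtained by bilinear extension of the
rules `[Id⊗f, Id⊗g] = Id⊗(f∂g − g∂f)`; `[Id⊗f, A⊗g] = A⊗(f∂g)` for `A ∈ sl(U)`;
`[A⊗f, B⊗g] = [A,B]⊗(fg)`; `[Id⊗f, w⊗g] = w⊗(f∂g + ∂(f)g)` for `w ∈ U`;
`[A⊗f, w⊗g] = A(w)⊗(fg)`; and
`[w⊗f, w'⊗g] = φ(w,w')⊗(f∂g − g∂f) + λ(w,w')·Id⊗(fg)`, where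
`φ(w,w')(w'') = λ(w,w'')w' + λ(w',w'')w` (so `φ(u,u) = 2E`, `φ(u,v) = −H`,
`φ(v,v) = −2F`), written out in the coordinates of `Frank`. -/
def fbra (Φ : Type*) [Field Φ] (n : ℕ) (X Y : Frank Φ n) : Frank Φ n where
  p := omul Φ n X.w (odel Φ n Y.p) - omul Φ n Y.w (odel Φ n X.p)
      + omul Φ n (odel Φ n X.w) Y.p - omul Φ n (odel Φ n Y.w) X.p
      + omul Φ n X.a Y.p - omul Φ n Y.a X.p
      + omul Φ n X.b Y.q - omul Φ n Y.b X.q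
  q := omul Φ n X.w (odel Φ n Y.q) - omul Φ n Y.w (odel Φ n X.q)
      + omul Φ n (odel Φ n X.w) Y.q - omul Φ n (odel Φ n Y.w) X.q
      - omul Φ n X.a Y.q + omul Φ n Y.a X.q
      + omul Φ n X.c Y.p - omul Φ n Y.c X.p
  a := omul Φ n X.w (odel Φ n Y.a) - omul Φ n Y.w (odel Φ n X.a)
      + omul Φ n X.b Y.c - omul Φ n X.c Y.b
      - (omul Φ n X.p (odel Φ n Y.q) - omul Φ n Y.q (odel Φ n X.p))
      - (omul Φ n X.q (odel Φ n Y.p) - omul Φ n Y.p (odel Φ n X.q))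
  b := omul Φ n X.w (odel Φ n Y.b) - omul Φ n Y.w (odel Φ n X.b)
      + (2 : Φ) • (omul Φ n X.a Y.b - omul Φ n X.b Y.a)
      + (2 : Φ) • (omul Φ n X.p (odel Φ n Y.p) - omul Φ n Y.p (odel Φ n X.p))
  c := omul Φ n X.w (odel Φ n Y.c) - omul Φ n Y.w (odel Φ n X.c)
      + (2 : Φ) • (omul Φ n X.c Y.a - omul Φ n X.a Y.c)
      - (2 : Φ) • (omul Φ n X.q (odel Φ n Y.q) - omul Φ n Y.q (odel Φ n X.q))
  w := omul Φ n X.w (odel Φ n Y.w) - omul Φ n Y.w (odel Φ n X.w)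
      + omul Φ n X.p Y.q - omul Φ n X.q Y.p

/-- The element `u ⊗ f` of the Frank algebra. -/
def uT (Φ : Type*) [Field Φ] (n : ℕ) (f : Fin (3 ^ n) → Φ) : Frank Φ n :=
  ⟨f, 0, 0, 0, 0, 0⟩

/-- The element `v ⊗ g` of the Frank algebra. -/
def vT (Φ : Type*) [Field Φ] (n : ℕ) (g : Fin (3 ^ n) → Φ) : Frank Φ n :=
  ⟨0, g, 0, 0, 0, 0⟩

section FrankAux

open Finset

variable {Φ : Type*} [Field Φ] {n : ℕ}

/-- Extension of a coordinate vector to a function on `ℕ`. -/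
def oext (n : ℕ) (f : Fin (3 ^ n) → Φ) : ℕ → Φ :=
  fun m => if h : m < 3 ^ n then f ⟨m, h⟩ else 0

/-- Hurwitz-type product on `ℕ → Φ`. -/
def nmul (F G : ℕ → Φ) : ℕ → Φ :=
  fun k => ∑ p ∈ antidiagonal k, (k.choose p.1 : Φ) * F p.1 * G p.2

/-- Shift operator on `ℕ → Φ`. -/
def ndel (F : ℕ → Φ) : ℕ → Φ := fun k => F (k + 1)

lemma omul_apply (f g : Fin (3 ^ n) → Φ) (k : Fin (3 ^ n)) :
    omul Φ n f g k = nmul (oext n f) (oext n g) (k : ℕ) := by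
  rw [omul, nmul, ← Finset.sum_product']
  rw [show (∑ p ∈ (univ ×ˢ univ : Finset (Fin (3 ^ n) × Fin (3 ^ n))),
      if ((p.1 : ℕ)) + ((p.2 : ℕ)) = (k : ℕ)
      then ((((p.1 : ℕ)) + ((p.2 : ℕ))).choose ((p.1 : ℕ)) : Φ) * f p.1 * g p.2 else 0)
      = ∑ p ∈ (univ ×ˢ univ : Finset (Fin (3 ^ n) × Fin (3 ^ n))) |>.filter
          (fun p => ((p.1 : ℕ)) + ((p.2 : ℕ)) = (k : ℕ)),
          ((((p.1 : ℕ)) + ((p.2 : ℕ))).choose ((p.1 : ℕ)) : Φ) * f p.1 * g p.2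
    from (Finset.sum_filter _ _).symm]
  refine Finset.sum_bij' (fun p _ => (((p.1 : ℕ)), ((p.2 : ℕ))))
    (fun q hq => (⟨q.1 % 3 ^ n, Nat.mod_lt _ (by positivity)⟩,
                  ⟨q.2 % 3 ^ n, Nat.mod_lt _ (by positivity)⟩)) ?_ ?_ ?_ ?_ ?_
  · intro p hp
    simp only [mem_filter] at hp
    simpa using hp.2
  · intro q hq
    have hq' := Finset.HasAntidiagonal.mem_antidiagonal.mp hq
    have h1 : q.1 < 3 ^ n := lt_of_le_of_lt (by omega) k.isLt
    have h2 : q.2 < 3 ^ n := lt_of_le_of_lt (by omega) k.isLt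
    simp [Nat.mod_eq_of_lt h1, Nat.mod_eq_of_lt h2, hq']
  · intro p hp
    simp only [Prod.ext_iff, Fin.ext_iff]
    exact ⟨by simp [Nat.mod_eq_of_lt p.1.isLt], by simp [Nat.mod_eq_of_lt p.2.isLt]⟩
  · intro q hq
    have hq' := Finset.HasAntidiagonal.mem_antidiagonal.mp hq
    have h1 : q.1 < 3 ^ n := lt_of_le_of_lt (by omega) k.isLt
    have h2 : q.2 < 3 ^ n := lt_of_le_of_lt (by omega) k.isLt
    simp only [Prod.ext_iff]
    exact ⟨by simp [Nat.mod_eq_of_lt h1], by simp [Nat.mod_eq_of_lt h2]⟩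
  · intro p hp
    simp only [mem_filter] at hp
    rw [oext, oext, dif_pos p.1.isLt, dif_pos p.2.isLt]
    rw [hp.2]

lemma oext_omul (f g : Fin (3 ^ n) → Φ) {m : ℕ} (hm : m < 3 ^ n) :
    oext n (omul Φ n f g) m = nmul (oext n f) (oext n g) m := by
  rw [oext, dif_pos hm]
  exact omul_apply f g ⟨m, hm⟩

lemma oext_odel (f : Fin (3 ^ n) → Φ) : oext n (odel Φ n f) = ndel (oext n f) := by
  funext m
  by_cases hm : m < 3 ^ n
  · rw [oext, dif_pos hm, odel, ndel, oext]
  · rw [oext, dif_neg hm, ndel, oext, dif_neg (by omega)]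

lemma nmul_congr {F F' G G' : ℕ → Φ} (k : ℕ) (hF : ∀ m, m ≤ k → F m = F' m)
    (hG : ∀ m, m ≤ k → G m = G' m) : nmul F G k = nmul F' G' k := by
  rw [nmul, nmul]
  refine Finset.sum_congr rfl fun p hp => ?_
  have := Finset.HasAntidiagonal.mem_antidiagonal.mp hp
  rw [hF _ (by omega), hG _ (by omega)]

lemma nmul_comm (F G : ℕ → Φ) : nmul F G = nmul G F := by
  funext k
  rw [nmul, nmul,
    ← Finset.Nat.sum_antidiagonal_swap (f := fun p => (k.choose p.1 : Φ) * G p.1 * F p.2)]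
  refine Finset.sum_congr rfl fun p hp => ?_
  have h := Finset.HasAntidiagonal.mem_antidiagonal.mp hp
  rw [Nat.choose_symm_of_eq_add h.symm]
  simp only [Prod.fst_swap, Prod.snd_swap]
  ring

lemma choose3 (a b c : ℕ) :
    (a + b + c).choose (a + b) * ((a + b).choose a)
      = (a + b + c).choose a * ((b + c).choose b) := by
  rw [show (a + b + c).choose (a + b) = (a + b + c).choose c from
      Nat.choose_symm_of_eq_add (by ring),
    show (a + b).choose a = (a + b).choose b from Nat.choose_symm_add,
    show (a + b + c).choose a = (a + b + c).choose (b + c) from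
      Nat.choose_symm_of_eq_add (by ring),
    show (b + c).choose b = (b + c).choose c from Nat.choose_symm_add]
  refine Nat.eq_of_mul_eq_mul_right
    (Nat.mul_pos (Nat.mul_pos a.factorial_pos b.factorial_pos) c.factorial_pos) ?_
  have h1 := Nat.add_choose_mul_factorial_mul_factorial (a + b) c
  have h2 := Nat.add_choose_mul_factorial_mul_factorial a b
  have h3 := Nat.add_choose_mul_factorial_mul_factorial a (b + c)
  have h4 := Nat.add_choose_mul_factorial_mul_factorial b c
  rw [← add_assoc] at h3
  zify at h1 h2 h3 h4 ⊢
  linear_combination (((a + b + c).choose c : ℤ) * (c.factorial : ℤ)) * h2 + h1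
    - (((a + b + c).choose (b + c) : ℤ) * (a.factorial : ℤ)) * h4 - h3

lemma nmul_assoc (F G H : ℕ → Φ) : nmul (nmul F G) H = nmul F (nmul G H) := by
  funext k
  rw [nmul, nmul]
  have l : ∀ p ∈ antidiagonal k, (k.choose p.1 : Φ) * nmul F G p.1 * H p.2
      = ∑ q ∈ antidiagonal p.1,
          (k.choose p.1 : Φ) * ((p.1.choose q.1 : Φ) * F q.1 * G q.2) * H p.2 := by
    intro p _
    rw [nmul, Finset.mul_sum, Finset.sum_mul]
  have r : ∀ p ∈ antidiagonal k, (k.choose p.1 : Φ) * F p.1 * nmul G H p.2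
      = ∑ q ∈ antidiagonal p.2,
          (k.choose p.1 : Φ) * F p.1 * ((p.2.choose q.1 : Φ) * G q.1 * H q.2) := by
    intro p _
    rw [nmul, Finset.mul_sum]
  rw [Finset.sum_congr rfl l, Finset.sum_congr rfl r,
    Finset.sum_sigma' (antidiagonal k) (fun p => antidiagonal p.1),
    Finset.sum_sigma' (antidiagonal k) (fun p => antidiagonal p.2)]
  refine Finset.sum_bij' (fun x _ => ⟨(x.2.1, x.2.2 + x.1.2), (x.2.2, x.1.2)⟩)
    (fun y _ => ⟨(y.1.1 + y.2.1, y.2.2), (y.1.1, y.2.1)⟩) ?_ ?_ ?_ ?_ ?_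
  · intro x hx
    obtain ⟨⟨m, c⟩, a, b⟩ := x
    simp only [Finset.mem_sigma, Finset.HasAntidiagonal.mem_antidiagonal] at hx
    simp only [Finset.mem_sigma, Finset.HasAntidiagonal.mem_antidiagonal]
    exact ⟨by omega, trivial⟩
  · intro y hy
    obtain ⟨⟨a, m⟩, b, c⟩ := y
    simp only [Finset.mem_sigma, Finset.HasAntidiagonal.mem_antidiagonal] at hy
    simp only [Finset.mem_sigma, Finset.HasAntidiagonal.mem_antidiagonal]
    exact ⟨by omega, trivial⟩
  · intro x hx
    obtain ⟨⟨m, c⟩, a, b⟩ := x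
    simp only [Finset.mem_sigma, Finset.HasAntidiagonal.mem_antidiagonal] at hx
    have hm : m = a + b := by omega
    subst hm
    rfl
  · intro y hy
    obtain ⟨⟨a, m⟩, b, c⟩ := y
    simp only [Finset.mem_sigma, Finset.HasAntidiagonal.mem_antidiagonal] at hy
    have hm : m = b + c := by omega
    subst hm
    rfl
  · intro x hx
    obtain ⟨⟨m, c⟩, a, b⟩ := x
    simp only [Finset.mem_sigma, Finset.HasAntidiagonal.mem_antidiagonal] at hx
    obtain ⟨hx1, hx2⟩ := hx
    dsimp only
    rw [show m = a + b by omega, show k = a + b + c by omega]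
    have hcast : (((a + b + c).choose (a + b) * ((a + b).choose a) : ℕ) : Φ)
        = (((a + b + c).choose a * ((b + c).choose b) : ℕ) : Φ) := by rw [choose3]
    push_cast at hcast ⊢
    linear_combination (F a * G b * H c) * hcast

lemma nmul_succ (F G : ℕ → Φ) (k : ℕ) :
    nmul F G (k + 1) = nmul (ndel F) G k + nmul F (ndel G) k := by
  have hG : nmul F (ndel G) k
      = ∑ p ∈ antidiagonal (k + 1), (k.choose p.1 : Φ) * F p.1 * G p.2 := by
    rw [Finset.Nat.sum_antidiagonal_succ'
      (f := fun p => (k.choose p.1 : Φ) * F p.1 * G p.2)]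
    rw [Nat.choose_succ_self]
    simp [nmul, ndel]
  rw [nmul, Finset.Nat.sum_antidiagonal_succ]
  have hsplit : ∀ p ∈ antidiagonal k,
      (((k + 1).choose (p.1 + 1) : ℕ) : Φ) * F (p.1 + 1) * G p.2
        = (k.choose p.1 : Φ) * F (p.1 + 1) * G p.2
          + (k.choose (p.1 + 1) : Φ) * F (p.1 + 1) * G p.2 := by
    intro p _
    rw [Nat.choose_succ_succ']
    push_cast
    ring
  rw [Finset.sum_congr rfl hsplit, Finset.sum_add_distrib]
  rw [hG, Finset.Nat.sum_antidiagonal_succ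
    (f := fun p => (k.choose p.1 : Φ) * F p.1 * G p.2)]
  simp only [nmul, ndel, Nat.choose_zero_right, Nat.cast_one, one_mul]
  ring

lemma nmul_oext_top [CharP Φ 3] (f g : Fin (3 ^ n) → Φ) :
    nmul (oext n f) (oext n g) (3 ^ n) = 0 := by
  rw [nmul]
  refine Finset.sum_eq_zero fun p hp => ?_
  have hp' := Finset.HasAntidiagonal.mem_antidiagonal.mp hp
  rcases eq_or_ne p.1 0 with h0 | h0
  · have h2 : p.2 = 3 ^ n := by omega
    rw [h2]
    simp [oext]
  rcases eq_or_ne p.1 (3 ^ n) with h1 | h1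
  · rw [h1]
    simp [oext]
  · have hd : (3 : ℕ) ∣ (3 ^ n).choose p.1 := Nat.Prime.dvd_choose_pow Nat.prime_three h0 h1
    have hz : (((3 ^ n).choose p.1 : ℕ) : Φ) = 0 := (CharP.cast_eq_zero_iff Φ 3 _).mpr hd
    rw [hz]
    ring

lemma omul_comm (f g : Fin (3 ^ n) → Φ) : omul Φ n f g = omul Φ n g f := by
  funext k
  rw [omul_apply, omul_apply, nmul_comm]

lemma omul_assoc (f g h : Fin (3 ^ n) → Φ) :
    omul Φ n (omul Φ n f g) h = omul Φ n f (omul Φ n g h) := by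
  funext k
  rw [omul_apply, omul_apply]
  rw [nmul_congr (k : ℕ) (fun m hm => oext_omul f g (lt_of_le_of_lt hm k.isLt))
    (fun _ _ => rfl)]
  rw [nmul_congr (k : ℕ) (fun _ _ => rfl)
    (fun m hm => oext_omul g h (lt_of_le_of_lt hm k.isLt))]
  rw [nmul_assoc]

lemma omul_leibniz [CharP Φ 3] (f g : Fin (3 ^ n) → Φ) :
    odel Φ n (omul Φ n f g) = omul Φ n (odel Φ n f) g + omul Φ n f (odel Φ n g) := by
  funext k
  rw [Pi.add_apply, omul_apply, omul_apply, oext_odel, oext_odel, ← nmul_succ]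
  by_cases h : (k : ℕ) + 1 < 3 ^ n
  · rw [odel, dif_pos h]
    exact omul_apply f g ⟨(k : ℕ) + 1, h⟩
  · rw [odel, dif_neg h]
    have he : (k : ℕ) + 1 = 3 ^ n := by omega
    rw [he, nmul_oext_top]

lemma omul_zero_left (f : Fin (3 ^ n) → Φ) : omul Φ n 0 f = 0 := by
  funext k; simp [omul]

lemma omul_zero_right (f : Fin (3 ^ n) → Φ) : omul Φ n f 0 = 0 := by
  funext k; simp [omul]

lemma odel_zero : odel Φ n (0 : Fin (3 ^ n) → Φ) = 0 := by
  funext k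
  rw [odel]
  split <;> simp

lemma odel_neg (f : Fin (3 ^ n) → Φ) : odel Φ n (-f) = -odel Φ n f := by
  funext k
  rw [Pi.neg_apply, odel, odel]
  split <;> simp

lemma omul_neg_left (f g : Fin (3 ^ n) → Φ) : omul Φ n (-f) g = -omul Φ n f g := by
  funext k
  rw [Pi.neg_apply, omul, omul, ← Finset.sum_neg_distrib]
  refine Finset.sum_congr rfl fun i _ => ?_
  rw [← Finset.sum_neg_distrib]
  refine Finset.sum_congr rfl fun j _ => ?_
  split <;> simp <;> ring

lemma omul_add_left (f g h : Fin (3 ^ n) → Φ) :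
    omul Φ n (f + g) h = omul Φ n f h + omul Φ n g h := by
  funext k
  rw [Pi.add_apply, omul, omul, omul, ← Finset.sum_add_distrib]
  refine Finset.sum_congr rfl fun i _ => ?_
  rw [← Finset.sum_add_distrib]
  refine Finset.sum_congr rfl fun j _ => ?_
  split <;> simp <;> ring

lemma omul_sub_left (f g h : Fin (3 ^ n) → Φ) :
    omul Φ n (f - g) h = omul Φ n f h - omul Φ n g h := by
  funext k
  rw [Pi.sub_apply, omul, omul, omul, ← Finset.sum_sub_distrib]
  refine Finset.sum_congr rfl fun i _ => ?_
  rw [← Finset.sum_sub_distrib]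
  refine Finset.sum_congr rfl fun j _ => ?_
  split <;> simp <;> ring

end FrankAux

/-- In the Frank algebra `F(n)`, the triple brackets recover the J-ternary triple
product: `[[u⊗f, v⊗g], u⊗h] = u ⊗ (g·f·∂(h) − h·g·∂(f)) = u ⊗ L_{f,g}h` and
`[[v⊗f, u⊗g], v⊗h] = −v ⊗ L_{f,g}h`. -/
theorem frank_triple_bracket (Φ : Type*) [Field Φ] [CharP Φ 3] (n : ℕ) (hn : 1 ≤ n)
    (f g h : Fin (3 ^ n) → Φ) :
    fbra Φ n (fbra Φ n (uT Φ n f) (vT Φ n g)) (uT Φ n h) =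
      uT Φ n (omul Φ n (omul Φ n g f) (odel Φ n h) - omul Φ n (omul Φ n h g) (odel Φ n f)) ∧
    fbra Φ n (fbra Φ n (uT Φ n f) (vT Φ n g)) (uT Φ n h) = uT Φ n (Lt Φ n f g h) ∧
    fbra Φ n (fbra Φ n (vT Φ n f) (uT Φ n g)) (vT Φ n h) = vT Φ n (-(Lt Φ n f g h)) := by
  have ecomm : omul Φ n (omul Φ n g f) (odel Φ n h)
      = omul Φ n (omul Φ n f g) (odel Φ n h) := by rw [omul_comm g f]
  have key : omul Φ n (omul Φ n f g) (odel Φ n h) + omul Φ n (odel Φ n (omul Φ n f g)) h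
      + omul Φ n (omul Φ n g (odel Φ n f) - omul Φ n f (odel Φ n g)) h
      = omul Φ n (omul Φ n g f) (odel Φ n h) - omul Φ n (omul Φ n h g) (odel Φ n f) := by
    rw [omul_leibniz, omul_add_left, omul_sub_left]
    have e2 : omul Φ n (omul Φ n (odel Φ n f) g) h
        = omul Φ n (omul Φ n g (odel Φ n f)) h := by rw [omul_comm (odel Φ n f) g]
    have e3 : omul Φ n (omul Φ n h g) (odel Φ n f)
        = omul Φ n (omul Φ n g (odel Φ n f)) h := by
      rw [omul_assoc h g (odel Φ n f), omul_comm h (omul Φ n g (odel Φ n f))]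
    have h3 : omul Φ n (omul Φ n g (odel Φ n f)) h + omul Φ n (omul Φ n g (odel Φ n f)) h
        + omul Φ n (omul Φ n g (odel Φ n f)) h = 0 := by
      funext k
      simp only [Pi.add_apply, Pi.zero_apply]
      linear_combination (omul Φ n (omul Φ n g (odel Φ n f)) h k) * (CharP.cast_eq_zero Φ 3)
    linear_combination ecomm.symm + e2 + e3 + h3
  refine ⟨?_, ?_, ?_⟩ <;>
    simp only [fbra, uT, vT, Lt, odel_zero, omul_zero_left, omul_zero_right, odel_neg,
      omul_neg_left, sub_zero, zero_sub, add_zero, zero_add, neg_zero, smul_zero, neg_neg,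
      neg_sub, Frank.mk.injEq]
  · exact ⟨key, trivial, trivial, trivial, trivial, trivial⟩
  · exact ⟨by linear_combination key + ecomm, trivial, trivial, trivial, trivial, trivial⟩
  · exact ⟨trivial, by linear_combination -key - ecomm, trivial, trivial, trivial, trivial⟩
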